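/- For Re(s) > 1 let F(s) = ∏_{q prime, q ≡ 3 (mod 4)} (1 − q^{-s})^{-1}. Then (s − 1)·F(s)² tends to 2·F(2)/π as s → 1 with Re(s) > 1, where F(2) = ∏_{q prime, q ≡ 3 (mod 4)} (1 − q^{-2})^{-1}. In particular F(s)² has a simple pole at s = 1 with limiting residue 2F(2)/π. -/

import Mathlib

open Complex Filter Topology Real

namespace FsqAux

noncomputable def χ : DirichletCharacter ℂ 4 := (ZMod.χ₄).ringHomComp (Int.castRingHom ℂ)

lemma χ_nat (n : ℕ) : χ (n : ZMod 4) = if n % 2 = 0 then 0 else if n % 4 = 1 then 1 else -1 := by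
  rw [χ, MulChar.ringHomComp_apply, ZMod.χ₄_nat_eq_if_mod_four]
  split_ifs <;> simp

lemma one_sub_mem {z : ℂ} (hz : ‖z‖ < 1) : 1 - z ∈ slitPlane := by
  rw [mem_slitPlane_iff]
  left
  simp only [sub_re, one_re]
  have h1 := Complex.abs_re_le_norm z
  have h2 := le_abs_self z.re
  nlinarith

lemma one_sub_ne {z : ℂ} (hz : ‖z‖ < 1) : 1 - z ≠ 0 :=
  slitPlane_ne_zero (one_sub_mem hz)

lemma arg_ne {z : ℂ} (hz : ‖z‖ < 1) : (1 - z).arg ≠ π := by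
  have := one_sub_mem hz
  rw [mem_slitPlane_iff] at this
  intro hpi
  rw [Complex.arg_eq_pi_iff] at hpi
  rcases this with h | h
  · linarith [hpi.1]
  · exact h hpi.2

lemma norm_natCast_cpow {n : ℕ} (hn : 0 < n) (w : ℂ) : ‖(n:ℂ) ^ w‖ = (n:ℝ) ^ w.re := by
  rw [← ofReal_natCast, norm_cpow_eq_rpow_re_of_pos (by exact_mod_cast hn)]

lemma norm_natCast_cpow_le {n : ℕ} (hn : 1 ≤ n) {s : ℂ} (hs : 1 ≤ s.re) :
    ‖(n:ℂ) ^ (-s)‖ ≤ (n:ℝ)⁻¹ := by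
  rw [norm_natCast_cpow (by omega), neg_re]
  calc (n:ℝ) ^ (-s.re) ≤ (n:ℝ) ^ (-1 : ℝ) :=
        Real.rpow_le_rpow_of_exponent_le (by exact_mod_cast hn) (by linarith)
    _ = (n:ℝ)⁻¹ := Real.rpow_neg_one _

lemma norm_natCast_cpow_lt_one {n : ℕ} (hn : 2 ≤ n) {s : ℂ} (hs : 1 ≤ s.re) :
    ‖(n:ℂ) ^ (-s)‖ < 1 :=
  (norm_natCast_cpow_le (by omega) hs).trans_lt (by
    rw [inv_lt_one_iff₀]; right; exact_mod_cast by omega)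


lemma re_pos_one_sub {z : ℂ} (hz : ‖z‖ < 1) : 0 < (1 - z).re := by
  simp only [sub_re, one_re]
  have h1 := Complex.abs_re_le_norm z
  have h2 := le_abs_self z.re
  nlinarith

variable {s : ℂ}

lemma summable_cpow (hs : 1 < s.re) : Summable fun n : ℕ => (n:ℂ) ^ (-s) := by
  have := (summable_riemannZetaSummand hs).of_norm
  simpa only [riemannZetaSummandHom, MonoidWithZeroHom.coe_mk, ZeroHom.coe_mk] using this

lemma summable_log_nat (hs : 1 < s.re) :
    Summable fun n : ℕ => Complex.log (1 - (n:ℂ) ^ (-s)) :=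
  (summable_cpow hs).clog_one_sub

lemma summable_log_primes (hs : 1 < s.re) :
    Summable fun p : Nat.Primes => Complex.log (1 - (p:ℂ) ^ (-s)) :=
  (summable_log_nat hs).comp_injective Subtype.val_injective

lemma summable_log_T (hs : 1 < s.re) :
    Summable fun q : {q : ℕ // q.Prime ∧ q % 4 = 3} =>
      Complex.log (1 - ((q:ℕ):ℂ) ^ (-s)) :=
  (summable_log_nat hs).comp_injective Subtype.val_injective

lemma summable_log_L (hs : 1 < s.re) :
    Summable fun p : Nat.Primes => Complex.log (1 - χ (p:ℕ) * (p:ℂ) ^ (-s)) := by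
  have h0 := (summable_dirichletSummand χ hs).of_norm
  simp only [dirichletSummandHom, MonoidWithZeroHom.coe_mk, ZeroHom.coe_mk] at h0
  exact h0.clog_one_sub.comp_injective Subtype.val_injective

lemma cexp_tsum_neg_log {ι : Type*} {f : ι → ℂ} (h : ∀ i, ‖f i‖ < 1)
    (hsum : Summable fun i => Complex.log (1 - f i)) :
    Complex.exp (∑' i, -Complex.log (1 - f i)) = ∏' i, (1 - f i)⁻¹ := by
  have H := (hsum.neg.hasSum.cexp)
  have heq : (cexp ∘ fun i => -Complex.log (1 - f i)) = fun i => (1 - f i)⁻¹ :=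
    funext fun i => by
      rw [Function.comp_apply, Complex.exp_neg, Complex.exp_log (one_sub_ne (h i))]
  rw [heq] at H
  exact H.tprod_eq.symm

lemma exp_A (hs : 1 < s.re) :
    Complex.exp (∑' p : Nat.Primes, -Complex.log (1 - (p:ℂ) ^ (-s))) = riemannZeta s := by
  have := EulerProduct.exp_tsum_primes_log_eq_tsum
    (f := riemannZetaSummandHom (ne_zero_of_one_lt_re hs)) (summable_riemannZetaSummand hs)
  rw [tsum_riemannZetaSummand hs] at this
  simpa only [riemannZetaSummandHom, MonoidWithZeroHom.coe_mk, ZeroHom.coe_mk] using this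

lemma exp_B (hs : 1 < s.re) :
    Complex.exp (∑' p : Nat.Primes, -Complex.log (1 - χ (p:ℕ) * (p:ℂ) ^ (-s)))
      = ∑' n : ℕ, χ n * (n:ℂ) ^ (-s) := by
  have := EulerProduct.exp_tsum_primes_log_eq_tsum
    (f := dirichletSummandHom χ (ne_zero_of_one_lt_re hs)) (summable_dirichletSummand χ hs)
  simpa only [dirichletSummandHom, MonoidWithZeroHom.coe_mk, ZeroHom.coe_mk] using this

lemma exp_C (hs : 1 < s.re) :
    Complex.exp (∑' q : {q : ℕ // q.Prime ∧ q % 4 = 3},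
        -Complex.log (1 - ((q:ℕ):ℂ) ^ (-s)))
      = ∏' q : {q : ℕ // q.Prime ∧ q % 4 = 3}, (1 - ((q:ℕ):ℂ) ^ (-s))⁻¹ :=
  cexp_tsum_neg_log
    (fun q => norm_natCast_cpow_lt_one q.2.1.two_le hs.le)
    (summable_log_T hs)


def two' : Nat.Primes := ⟨2, Nat.prime_two⟩

lemma chi_two : χ ((2:ℕ) : ZMod 4) = 0 := by rw [χ_nat]; norm_num

lemma chi_one_mod (p : ℕ) (hp : p % 4 = 1) : χ (p : ZMod 4) = 1 := by
  rw [χ_nat]; rw [if_neg (by omega), if_pos hp]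

lemma chi_three_mod (p : ℕ) (hp : p % 4 = 3) : χ (p : ZMod 4) = -1 := by
  rw [χ_nat]; rw [if_neg (by omega), if_neg (by omega)]

lemma log_one_sub_sq {x : ℂ} (hx : ‖x‖ < 1) :
    Complex.log (1 - x * x) = Complex.log (1 - x) + Complex.log (1 + x) := by
  have hx' : ‖-x‖ < 1 := by rwa [norm_neg]
  have h1 : (1 : ℂ) - x ≠ 0 := one_sub_ne hx
  have h2 : (1 : ℂ) + x ≠ 0 := by
    have := one_sub_ne hx'
    simpa [sub_neg_eq_add] using this
  have ha1 : |(1 - x).arg| < π / 2 := by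
    rw [Complex.abs_arg_lt_pi_div_two_iff]
    exact Or.inl (re_pos_one_sub hx)
  have ha2 : |(1 + x).arg| < π / 2 := by
    rw [Complex.abs_arg_lt_pi_div_two_iff]
    left
    have := re_pos_one_sub hx'
    simpa [sub_neg_eq_add] using this
  have hfact : (1 : ℂ) - x * x = (1 - x) * (1 + x) := by ring
  rw [hfact, Complex.log_mul h1 h2]
  constructor
  · rw [abs_lt] at ha1 ha2
    linarith [Real.pi_pos]
  · rw [abs_lt] at ha1 ha2
    linarith [Real.pi_pos]

lemma prime_cpow_two_mul (p : ℕ) (hp : p.Prime) :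
    (p:ℂ) ^ (-(2*s)) = (p:ℂ) ^ (-s) * (p:ℂ) ^ (-s) := by
  have hp0 : (p:ℂ) ≠ 0 := by exact_mod_cast hp.ne_zero
  rw [show -(2*s) = -s + -s by ring, Complex.cpow_add _ _ hp0]

lemma per_prime (hs : 1 < s.re) (p : Nat.Primes) :
    (-Complex.log (1 - (p:ℂ) ^ (-s))) - (-Complex.log (1 - χ (p:ℕ) * (p:ℂ) ^ (-s)))
      = (if p = two' then -Complex.log (1 - (2:ℂ) ^ (-s)) else 0)
        + (if (p:ℕ) % 4 = 3 then
            (2 * (-Complex.log (1 - (p:ℂ) ^ (-s))) - (-Complex.log (1 - (p:ℂ) ^ (-(2*s))))) else 0) := by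
  have hnorm : ‖(p:ℂ) ^ (-s)‖ < 1 := norm_natCast_cpow_lt_one p.2.two_le hs.le
  rcases eq_or_ne p two' with rfl | hp2
  · have : χ ((two' : ℕ) : ZMod 4) = 0 := chi_two
    rw [if_pos rfl, if_neg (by norm_num [two'])]
    rw [this]
    norm_num [two']
  · have hodd : (p:ℕ) % 4 = 1 ∨ (p:ℕ) % 4 = 3 := by
      have h2 : (p:ℕ) ≠ 2 := fun h => hp2 (Subtype.ext h)
      rcases Nat.Prime.eq_two_or_odd p.2 with h | h
      · exact absurd h h2
      · omega
    rw [if_neg hp2]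
    rcases hodd with h1 | h3
    · rw [if_neg (by omega), chi_one_mod _ h1]
      ring_nf
    · rw [if_pos h3, chi_three_mod _ h3]
      rw [prime_cpow_two_mul _ p.2, log_one_sub_sq hnorm]
      ring_nf

lemma key_identity (hs : 1 < s.re) :
    (∑' p : Nat.Primes, -Complex.log (1 - (p:ℂ) ^ (-s)))
      = (∑' p : Nat.Primes, -Complex.log (1 - χ (p:ℕ) * (p:ℂ) ^ (-s)))
        + 2 * (∑' q : {q : ℕ // q.Prime ∧ q % 4 = 3}, -Complex.log (1 - ((q:ℕ):ℂ) ^ (-s)))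
        - (∑' q : {q : ℕ // q.Prime ∧ q % 4 = 3}, -Complex.log (1 - ((q:ℕ):ℂ) ^ (-(2*s))))
        - Complex.log (1 - (2:ℂ) ^ (-s)) := by
  have hs2 : 1 < (2*s).re := by
    rw [mul_re]
    simp only [re_ofNat, im_ofNat]
    nlinarith
  have SA : Summable fun p : Nat.Primes => -Complex.log (1 - (p:ℂ) ^ (-s)) :=
    (summable_log_primes hs).neg
  have SB : Summable fun p : Nat.Primes => -Complex.log (1 - χ (p:ℕ) * (p:ℂ) ^ (-s)) :=
    (summable_log_L hs).neg
  have SD : Summable fun p : Nat.Primes => -Complex.log (1 - (p:ℂ) ^ (-(2*s))) :=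
    (summable_log_primes hs2).neg
  have SCT : Summable fun q : {q : ℕ // q.Prime ∧ q % 4 = 3} =>
      -Complex.log (1 - ((q:ℕ):ℂ) ^ (-s)) := (summable_log_T hs).neg
  have SDT : Summable fun q : {q : ℕ // q.Prime ∧ q % 4 = 3} =>
      -Complex.log (1 - ((q:ℕ):ℂ) ^ (-(2*s))) := (summable_log_T hs2).neg
  -- the e and h functions
  set c : ℂ := -Complex.log (1 - (2:ℂ) ^ (-s)) with hc
  set g : Nat.Primes → ℂ := fun p =>
    2 * (-Complex.log (1 - (p:ℂ) ^ (-s))) - (-Complex.log (1 - (p:ℂ) ^ (-(2*s)))) with hg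
  have Sg : Summable g := ((SA.mul_left 2).sub SD)
  have Sh : Summable fun p : Nat.Primes => (if (p:ℕ) % 4 = 3 then g p else 0) := by
    refine (Sg.indicator {p : Nat.Primes | (p:ℕ) % 4 = 3}).congr fun p => ?_
    by_cases h : (p:ℕ) % 4 = 3 <;> simp [Set.indicator_apply, h]
  have Se : Summable fun p : Nat.Primes => (if p = two' then c else 0) :=
    (hasSum_ite_eq two' c).summable
  have hsub : (∑' p : Nat.Primes, -Complex.log (1 - (p:ℂ) ^ (-s)))
      - (∑' p : Nat.Primes, -Complex.log (1 - χ (p:ℕ) * (p:ℂ) ^ (-s)))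
      = ∑' p : Nat.Primes, ((-Complex.log (1 - (p:ℂ) ^ (-s)))
          - (-Complex.log (1 - χ (p:ℕ) * (p:ℂ) ^ (-s)))) := (SA.tsum_sub SB).symm
  have hsplit : (∑' p : Nat.Primes, ((-Complex.log (1 - (p:ℂ) ^ (-s)))
          - (-Complex.log (1 - χ (p:ℕ) * (p:ℂ) ^ (-s)))))
      = (∑' p : Nat.Primes, (if p = two' then c else 0))
        + (∑' p : Nat.Primes, (if (p:ℕ) % 4 = 3 then g p else 0)) := by
    rw [← Se.tsum_add Sh]
    exact tsum_congr fun p => per_prime hs p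
  have he : (∑' p : Nat.Primes, (if p = two' then c else 0)) = c := tsum_ite_eq two' (fun _ => c)
  have hh : (∑' p : Nat.Primes, (if (p:ℕ) % 4 = 3 then g p else 0))
      = 2 * (∑' q : {q : ℕ // q.Prime ∧ q % 4 = 3}, -Complex.log (1 - ((q:ℕ):ℂ) ^ (-s)))
        - (∑' q : {q : ℕ // q.Prime ∧ q % 4 = 3}, -Complex.log (1 - ((q:ℕ):ℂ) ^ (-(2*s)))) := by
    have hι : Function.Injective
        (fun q : {q : ℕ // q.Prime ∧ q % 4 = 3} => (⟨q.1, q.2.1⟩ : Nat.Primes)) := by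
      intro q q' h
      rw [Subtype.ext_iff]
      simpa [Subtype.ext_iff] using h
    have hsupp : Function.support (fun p : Nat.Primes => if (p:ℕ) % 4 = 3 then g p else 0)
        ⊆ Set.range (fun q : {q : ℕ // q.Prime ∧ q % 4 = 3} => (⟨q.1, q.2.1⟩ : Nat.Primes)) := by
      intro p hp
      simp only [Function.mem_support, ne_eq, ite_eq_right_iff, not_forall] at hp
      exact ⟨⟨p.1, p.2, hp.1⟩, Subtype.ext rfl⟩
    calc (∑' p : Nat.Primes, if (p:ℕ) % 4 = 3 then g p else 0)
        = ∑' q : {q : ℕ // q.Prime ∧ q % 4 = 3},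
            (if ((⟨q.1, q.2.1⟩ : Nat.Primes) : ℕ) % 4 = 3 then g ⟨q.1, q.2.1⟩ else 0) :=
          (hι.tsum_eq hsupp).symm
      _ = ∑' q : {q : ℕ // q.Prime ∧ q % 4 = 3},
            (2 * (-Complex.log (1 - ((q:ℕ):ℂ) ^ (-s)))
              - (-Complex.log (1 - ((q:ℕ):ℂ) ^ (-(2*s))))) :=
          tsum_congr fun q => if_pos q.2.2
      _ = 2 * (∑' q : {q : ℕ // q.Prime ∧ q % 4 = 3}, -Complex.log (1 - ((q:ℕ):ℂ) ^ (-s)))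
            - (∑' q : {q : ℕ // q.Prime ∧ q % 4 = 3}, -Complex.log (1 - ((q:ℕ):ℂ) ^ (-(2*s)))) := by
          rw [(SCT.mul_left 2).tsum_sub SDT, tsum_mul_left]
  have := hsub.trans (hsplit.trans (by rw [he, hh]))
  linear_combination this


lemma norm_two_cpow_lt_one (hs : 1 < s.re) : ‖(2:ℂ) ^ (-s)‖ < 1 := by
  have := norm_natCast_cpow_lt_one (n := 2) le_rfl hs.le
  simpa using this

lemma product_eq (hs : 1 < s.re) :
    (∏' q : {q : ℕ // q.Prime ∧ q % 4 = 3}, (1 - ((q:ℕ):ℂ) ^ (-s))⁻¹) ^ 2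
        * (∑' n : ℕ, χ n * (n:ℂ) ^ (-s))
      = riemannZeta s * (1 - (2:ℂ) ^ (-s))
        * Complex.exp (∑' q : {q : ℕ // q.Prime ∧ q % 4 = 3},
            -Complex.log (1 - ((q:ℕ):ℂ) ^ (-(2*s)))) := by
  have ht : ‖(2:ℂ) ^ (-s)‖ < 1 := norm_two_cpow_lt_one hs
  have h2 : (1 : ℂ) - (2:ℂ) ^ (-s) = Complex.exp (Complex.log (1 - (2:ℂ) ^ (-s))) :=
    (Complex.exp_log (one_sub_ne ht)).symm
  rw [← exp_A hs, ← exp_B hs, ← exp_C hs, sq, h2, ← Complex.exp_add, ← Complex.exp_add,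
    ← Complex.exp_add, ← Complex.exp_add]
  congr 1
  linear_combination -key_identity (s := s) hs

lemma L_ne_zero (hs : 1 < s.re) : (∑' n : ℕ, χ n * (n:ℂ) ^ (-s)) ≠ 0 := by
  rw [← exp_B hs]; exact Complex.exp_ne_zero _


lemma cpow_sub_bound {a b : ℝ} (ha : 1 ≤ a) (hab : a ≤ b) {s : ℂ} (hs : 1 ≤ s.re)
    (hn : ‖s‖ ≤ 2) :
    ‖(b:ℂ) ^ (-s) - (a:ℂ) ^ (-s)‖ ≤ 2 * (a^2)⁻¹ * (b - a) := by
  have hderiv : ∀ x ∈ Set.Icc a b, HasDerivWithinAt (fun y : ℝ => (y:ℂ) ^ (-s))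
      (-s * (x:ℂ) ^ (-s-1)) (Set.Icc a b) x := by
    intro x hx
    have hx0 : (0:ℝ) < x := lt_of_lt_of_le (by linarith) hx.1
    have hmem : ((x:ℝ):ℂ) ∈ slitPlane := by
      rw [mem_slitPlane_iff]; left; simpa using hx0
    have h1 : HasDerivAt (fun z : ℂ => z ^ (-s)) (-s * (x:ℂ) ^ (-s-1) * 1) (x:ℂ) :=
      (hasDerivAt_id ((x:ℝ):ℂ)).cpow_const hmem
    have h2 := h1.comp_ofReal
    simpa using h2.hasDerivWithinAt
  have hbound : ∀ x ∈ Set.Icc a b, ‖-s * (x:ℂ) ^ (-s-1)‖ ≤ 2 * (a^2)⁻¹ := by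
    intro x hx
    have hx1 : (1:ℝ) ≤ x := le_trans ha hx.1
    have hx0 : (0:ℝ) < x := by linarith
    rw [norm_mul, norm_neg]
    have hxpow : ‖(x:ℂ) ^ (-s-1)‖ = x ^ ((-s-1).re) := by
      rw [norm_cpow_eq_rpow_re_of_pos hx0]
    rw [hxpow]
    have h1 : x ^ ((-s-1).re) ≤ x ^ (-2 : ℝ) := by
      apply Real.rpow_le_rpow_of_exponent_le hx1
      simp only [sub_re, neg_re, one_re]
      linarith
    have h2 : x ^ (-2 : ℝ) ≤ (a^2)⁻¹ := by
      rw [Real.rpow_neg hx0.le, show ((2:ℝ)) = ((2:ℕ):ℝ) by norm_num,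
        Real.rpow_natCast]
      apply inv_anti₀ (by positivity)
      exact pow_le_pow_left₀ (by linarith) hx.1 2
    calc ‖s‖ * x ^ ((-s-1).re) ≤ 2 * x ^ ((-s-1).re) := by
          apply mul_le_mul_of_nonneg_right hn (Real.rpow_nonneg hx0.le _)
      _ ≤ 2 * (a^2)⁻¹ := by
          apply mul_le_mul_of_nonneg_left (h1.trans h2) (by norm_num)
  have := (convex_Icc a b).norm_image_sub_le_of_norm_hasDerivWithin_le hderiv hbound
    (Set.left_mem_Icc.mpr hab) (Set.right_mem_Icc.mpr hab)
  calc ‖(b:ℂ) ^ (-s) - (a:ℂ) ^ (-s)‖ ≤ 2 * (a^2)⁻¹ * ‖b - a‖ := this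
    _ = 2 * (a^2)⁻¹ * (b - a) := by rw [Real.norm_eq_abs, _root_.abs_of_nonneg (by linarith : (0:ℝ) ≤ b - a)]

lemma summable_L (hs : 1 < s.re) : Summable fun n : ℕ => χ n * (n:ℂ) ^ (-s) := by
  have := (summable_dirichletSummand χ hs).of_norm
  simpa only [dirichletSummandHom, MonoidWithZeroHom.coe_mk, ZeroHom.coe_mk] using this

lemma L_pair (hs : 1 < s.re) :
    (∑' n : ℕ, χ n * (n:ℂ) ^ (-s))
      = ∑' k : ℕ, (((4*k+1 : ℕ):ℂ) ^ (-s) - ((4*k+3 : ℕ):ℂ) ^ (-s)) := by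
  have S0 : Summable fun n : ℕ => χ n * (n:ℂ) ^ (-s) := summable_L hs
  -- restrict to odd numbers
  have hinj : Function.Injective (fun m : ℕ => 2*m+1) := by
    intro m m' h
    have h' : 2*m+1 = 2*m'+1 := h
    omega
  have hsupp : Function.support (fun n : ℕ => χ n * (n:ℂ) ^ (-s))
      ⊆ Set.range (fun m : ℕ => 2*m+1) := by
    intro n hn
    rcases Nat.even_or_odd n with he | ho
    · exfalso
      apply hn
      show χ (n : ZMod 4) * (n:ℂ) ^ (-s) = 0
      rw [χ_nat, if_pos (Nat.even_iff.mp he), zero_mul]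
    · obtain ⟨m, hm⟩ := ho
      exact ⟨m, show 2 * m + 1 = n by omega⟩
  have h1 : (∑' n : ℕ, χ n * (n:ℂ) ^ (-s))
      = ∑' m : ℕ, χ (2*m+1 : ℕ) * ((2*m+1 : ℕ):ℂ) ^ (-s) := (hinj.tsum_eq hsupp).symm
  set c : ℕ → ℂ := fun m => χ (2*m+1 : ℕ) * ((2*m+1 : ℕ):ℂ) ^ (-s) with hcdef
  have Sc : Summable c := S0.comp_injective hinj
  have Sce : Summable fun k => c (2*k) := Sc.comp_injective (by intro k k' h; have h' : 2*k = 2*k' := h; omega)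
  have Sco : Summable fun k => c (2*k+1) := Sc.comp_injective (by intro k k' h; have h' : 2*k+1 = 2*k'+1 := h; omega)
  have hce : ∀ k : ℕ, c (2*k) = ((4*k+1 : ℕ):ℂ) ^ (-s) := by
    intro k
    have hn : 2*(2*k)+1 = 4*k+1 := by ring
    rw [hcdef]
    simp only []
    rw [hn, χ_nat, if_neg (by omega), if_pos (by omega), one_mul]
  have hco : ∀ k : ℕ, c (2*k+1) = -(((4*k+3 : ℕ):ℂ) ^ (-s)) := by
    intro k
    have hn : 2*(2*k+1)+1 = 4*k+3 := by ring
    rw [hcdef]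
    simp only []
    rw [hn, χ_nat, if_neg (by omega), if_neg (by omega), neg_one_mul]
  rw [h1, ← tsum_even_add_odd Sce Sco, ← Sce.tsum_add Sco]
  apply tsum_congr
  intro k
  rw [hce k, hco k, sub_eq_add_neg]


lemma leibniz_paired :
    HasSum (fun k : ℕ => ((4*k+1 : ℝ))⁻¹ - ((4*k+3 : ℝ))⁻¹) (π/4) := by
  have hsum : Summable fun k : ℕ => ((4*k+1 : ℝ))⁻¹ - ((4*k+3 : ℝ))⁻¹ := by
    have hS : Summable fun k : ℕ => 2 * (((k:ℝ)+1)^2)⁻¹ := by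
      have h0 : Summable fun k : ℕ => (((k:ℝ))^2)⁻¹ :=
        Real.summable_nat_pow_inv.mpr one_lt_two
      have h1 : Summable fun k : ℕ => (((k+1:ℕ):ℝ)^2)⁻¹ :=
        (summable_nat_add_iff 1).mpr h0
      exact (h1.mul_left 2).congr fun k => by push_cast; ring
    apply hS.of_nonneg_of_le
    · intro k
      have h1 : (0:ℝ) < 4*k+1 := by positivity
      have h2 : (4*k+1 : ℝ) ≤ 4*k+3 := by linarith
      have := inv_anti₀ h1 h2
      linarith
    · intro k
      have h1 : (0:ℝ) < 4*k+1 := by positivity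
      have h3 : (0:ℝ) < 4*k+3 := by positivity
      have key : ((4*k+1 : ℝ))⁻¹ - ((4*k+3 : ℝ))⁻¹ = 2 * ((4*k+1) * (4*k+3) : ℝ)⁻¹ := by
        field_simp
        ring
      rw [key]
      apply mul_le_mul_of_nonneg_left _ (by norm_num : (0:ℝ) ≤ 2)
      apply inv_anti₀ (by positivity)
      nlinarith [sq_nonneg ((k:ℝ))]
  have hpair : ∀ n : ℕ, ∑ k ∈ Finset.range n, (((4*k+1 : ℝ))⁻¹ - ((4*k+3 : ℝ))⁻¹)
      = ∑ i ∈ Finset.range (2*n), (-1:ℝ)^i / (2*i+1) := by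
    intro n
    induction n with
    | zero => simp
    | succ n ih =>
        rw [Finset.sum_range_succ, ih, show 2*(n+1) = (2*n)+1+1 by ring,
          Finset.sum_range_succ, Finset.sum_range_succ]
        have he : (-1:ℝ)^(2*n) = 1 := by rw [pow_mul]; norm_num
        have ho : (-1:ℝ)^(2*n+1) = -1 := by rw [pow_succ, he]; norm_num
        rw [he, ho]
        push_cast
        ring
  have htend : Tendsto (fun n : ℕ => ∑ k ∈ Finset.range n,
      (((4*k+1 : ℝ))⁻¹ - ((4*k+3 : ℝ))⁻¹)) atTop (𝓝 (π/4)) := by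
    have h2n : Tendsto (fun n : ℕ => 2*n) atTop atTop :=
      Filter.tendsto_atTop_mono (fun n => by simp only [id_eq]; omega) tendsto_id
    have := Real.tendsto_sum_pi_div_four.comp h2n
    refine this.congr fun n => ?_
    exact (hpair n).symm
  have hS := hsum.hasSum
  rwa [tendsto_nhds_unique hS.tendsto_sum_nat htend] at hS

lemma L_tendsto :
    Tendsto (fun s : ℂ => ∑' k : ℕ, (((4*k+1 : ℕ):ℂ) ^ (-s) - ((4*k+3 : ℕ):ℂ) ^ (-s)))
      (𝓝[{s : ℂ | 1 < s.re}] 1) (𝓝 (((π/4 : ℝ)) : ℂ)) := by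
  have hlim : (((π/4 : ℝ)) : ℂ)
      = ∑' k : ℕ, ((((4*k+1 : ℕ):ℂ))⁻¹ - (((4*k+3 : ℕ):ℂ))⁻¹) := by
    rw [show (π/4 : ℝ) = ∑' k : ℕ, (((4*k+1 : ℝ))⁻¹ - ((4*k+3 : ℝ))⁻¹) from
      leibniz_paired.tsum_eq.symm, Complex.ofReal_tsum]
    apply tsum_congr
    intro k
    push_cast
    ring
  rw [hlim]
  apply tendsto_tsum_of_dominated_convergence
    (bound := fun k : ℕ => 4 * (((4*(k:ℝ)+1))^2)⁻¹)
  · -- summable bound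
    have h0 : Summable fun k : ℕ => (((k:ℝ))^2)⁻¹ :=
      Real.summable_nat_pow_inv.mpr one_lt_two
    have h1 : Summable fun k : ℕ => (((k+1:ℕ):ℝ)^2)⁻¹ :=
      (summable_nat_add_iff 1).mpr h0
    apply ((h1.mul_left 4).of_nonneg_of_le (fun k => by positivity))
    intro k
    apply mul_le_mul_of_nonneg_left _ (by norm_num : (0:ℝ) ≤ 4)
    apply inv_anti₀ (by positivity)
    have : ((k+1:ℕ):ℝ) ≤ 4*(k:ℝ)+1 := by push_cast; linarith [Nat.cast_nonneg (α := ℝ) k]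
    nlinarith [Nat.cast_nonneg (α := ℝ) k]
  · -- pointwise convergence
    intro k
    have ha : ((4*k+1 : ℕ):ℂ) ≠ 0 := Nat.cast_ne_zero.mpr (by omega)
    have hb : ((4*k+3 : ℕ):ℂ) ≠ 0 := Nat.cast_ne_zero.mpr (by omega)
    have hta : Tendsto (fun s : ℂ => ((4*k+1 : ℕ):ℂ) ^ (-s)) (𝓝 1)
        (𝓝 (((4*k+1 : ℕ):ℂ) ^ (-(1:ℂ)))) :=
      (continuous_neg.tendsto 1).const_cpow (Or.inl ha)
    have htb : Tendsto (fun s : ℂ => ((4*k+3 : ℕ):ℂ) ^ (-s)) (𝓝 1)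
        (𝓝 (((4*k+3 : ℕ):ℂ) ^ (-(1:ℂ)))) :=
      (continuous_neg.tendsto 1).const_cpow (Or.inl hb)
    have := (hta.sub htb).mono_left
      (nhdsWithin_le_nhds (s := {s : ℂ | 1 < s.re}) (a := (1:ℂ)))
    simpa only [Complex.cpow_neg_one] using this
  · -- bound
    have hmem : ∀ᶠ s : ℂ in 𝓝[{s : ℂ | 1 < s.re}] 1,
        s ∈ {s : ℂ | 1 < s.re} ∧ ‖s - 1‖ < 1 := by
      apply Filter.eventually_and.mpr
      constructor
      · exact eventually_mem_nhdsWithin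
      · apply eventually_nhdsWithin_of_eventually_nhds
        have : Tendsto (fun s : ℂ => ‖s - 1‖) (𝓝 1) (𝓝 ‖(1:ℂ) - 1‖) :=
          (continuous_id.sub continuous_const).norm.tendsto 1
        simp only [sub_self, norm_zero] at this
        exact this.eventually_lt_const one_pos
    filter_upwards [hmem] with s hsmem
    intro k
    obtain ⟨hs1, hsb⟩ := hsmem
    have hsre : 1 ≤ s.re := le_of_lt hs1
    have hsn : ‖s‖ ≤ 2 := by
      calc ‖s‖ = ‖(1:ℂ) + (s - 1)‖ := by ring_nf
        _ ≤ ‖(1:ℂ)‖ + ‖s - 1‖ := norm_add_le _ _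
        _ ≤ 2 := by rw [norm_one]; linarith
    have hb := cpow_sub_bound (a := (4*(k:ℝ)+1)) (b := (4*(k:ℝ)+3))
      (by linarith [Nat.cast_nonneg (α := ℝ) k]) (by linarith) hsre hsn
    have hcast1 : (((4*(k:ℝ)+1) : ℝ):ℂ) = ((4*k+1 : ℕ):ℂ) := by push_cast; ring
    have hcast3 : (((4*(k:ℝ)+3) : ℝ):ℂ) = ((4*k+3 : ℕ):ℂ) := by push_cast; ring
    rw [hcast1, hcast3] at hb
    calc ‖((4*k+1 : ℕ):ℂ) ^ (-s) - ((4*k+3 : ℕ):ℂ) ^ (-s)‖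
        = ‖((4*k+3 : ℕ):ℂ) ^ (-s) - ((4*k+1 : ℕ):ℂ) ^ (-s)‖ := norm_sub_rev _ _
      _ ≤ 2 * ((4*(k:ℝ)+1)^2)⁻¹ * ((4*(k:ℝ)+3) - (4*(k:ℝ)+1)) := hb
      _ = 4 * ((4*(k:ℝ)+1)^2)⁻¹ := by ring


lemma norm_natCast_cpow_le_sq {q : ℕ} (hq : 1 ≤ q) {w : ℂ} (hw : 2 ≤ w.re) :
    ‖(q:ℂ) ^ (-w)‖ ≤ (((q:ℝ))^2)⁻¹ := by
  rw [norm_natCast_cpow (by omega), neg_re]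
  have hq1 : (1:ℝ) ≤ (q:ℝ) := by exact_mod_cast hq
  calc (q:ℝ) ^ (-w.re) ≤ (q:ℝ) ^ (-2 : ℝ) :=
        Real.rpow_le_rpow_of_exponent_le hq1 (by linarith)
    _ = (((q:ℝ))^2)⁻¹ := by
        rw [Real.rpow_neg (by linarith), show ((2:ℝ)) = ((2:ℕ):ℝ) by norm_num,
          Real.rpow_natCast]

lemma D_tendsto :
    Tendsto (fun s : ℂ => ∑' q : {q : ℕ // q.Prime ∧ q % 4 = 3},
        -Complex.log (1 - ((q:ℕ):ℂ) ^ (-(2*s))))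
      (𝓝[{s : ℂ | 1 < s.re}] 1)
      (𝓝 (∑' q : {q : ℕ // q.Prime ∧ q % 4 = 3},
        -Complex.log (1 - ((q:ℕ):ℂ) ^ (-(2:ℂ))))) := by
  apply tendsto_tsum_of_dominated_convergence
    (bound := fun q : {q : ℕ // q.Prime ∧ q % 4 = 3} => (3/2) * (((q:ℕ):ℝ)^2)⁻¹)
  · exact ((Real.summable_nat_pow_inv.mpr one_lt_two).mul_left (3/2)).comp_injective
      Subtype.val_injective
  · intro q
    have hq0 : ((q:ℕ):ℂ) ≠ 0 := Nat.cast_ne_zero.mpr q.2.1.ne_zero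
    have hnorm : ‖((q:ℕ):ℂ) ^ (-(2:ℂ))‖ < 1 :=
      norm_natCast_cpow_lt_one q.2.1.two_le (by norm_num)
    have h1 : Tendsto (fun s : ℂ => -(2*s)) (𝓝 1) (𝓝 (-(2:ℂ))) := by
      have hc : Continuous (fun s : ℂ => -(2*s)) := by continuity
      have := hc.tendsto (1:ℂ)
      simpa using this
    have hbase : Tendsto (fun s : ℂ => 1 - ((q:ℕ):ℂ) ^ (-(2*s))) (𝓝 1)
        (𝓝 (1 - ((q:ℕ):ℂ) ^ (-(2:ℂ)))) :=
      tendsto_const_nhds.sub (h1.const_cpow (Or.inl hq0))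
    have hlog := ((continuousAt_clog (one_sub_mem hnorm)).tendsto.comp hbase).neg
    exact hlog.mono_left (nhdsWithin_le_nhds (s := {s : ℂ | 1 < s.re}) (a := (1:ℂ)))
  · filter_upwards [eventually_mem_nhdsWithin] with s hs
    intro q
    have hs1 : 1 < s.re := hs
    have h2re : 2 ≤ (2*s).re := by
      rw [mul_re]
      simp only [re_ofNat, im_ofNat]
      nlinarith
    have hq1 : 1 ≤ (q:ℕ) := q.2.1.one_lt.le
    have hq3 : 3 ≤ (q:ℕ) := by
      have := q.2.1.two_le
      rcases Nat.lt_or_ge (q:ℕ) 3 with h | h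
      · exfalso
        have : (q:ℕ) = 2 := by omega
        have h4 := q.2.2
        omega
      · exact h
    have hq3' : (3:ℝ) ≤ ((q:ℕ):ℝ) := by exact_mod_cast hq3
    have hnq : ‖((q:ℕ):ℂ) ^ (-(2*s))‖ ≤ ((((q:ℕ)):ℝ)^2)⁻¹ :=
      norm_natCast_cpow_le_sq hq1 h2re
    have hsmall : ‖-(((q:ℕ):ℂ) ^ (-(2*s)))‖ ≤ 1/2 := by
      rw [norm_neg]
      refine hnq.trans ?_
      rw [show (1/2 : ℝ) = (2:ℝ)⁻¹ by norm_num]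
      apply inv_anti₀ (by norm_num)
      nlinarith
    have hlogb := Complex.norm_log_one_add_half_le_self hsmall
    rw [norm_neg]
    calc ‖Complex.log (1 - ((q:ℕ):ℂ) ^ (-(2*s)))‖
        = ‖Complex.log (1 + -(((q:ℕ):ℂ) ^ (-(2*s))))‖ := by rw [sub_eq_add_neg]
      _ ≤ (3/2) * ‖-(((q:ℕ):ℂ) ^ (-(2*s)))‖ := hlogb
      _ ≤ (3/2) * ((((q:ℕ)):ℝ)^2)⁻¹ := by
          rw [norm_neg]
          exact mul_le_mul_of_nonneg_left hnq (by norm_num)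

lemma exp_D_eq : Complex.exp (∑' q : {q : ℕ // q.Prime ∧ q % 4 = 3},
      -Complex.log (1 - ((q:ℕ):ℂ) ^ (-(2:ℂ))))
    = ∏' q : {q : ℕ // q.Prime ∧ q % 4 = 3}, (1 - ((q:ℕ):ℂ) ^ (-(2:ℂ)))⁻¹ :=
  cexp_tsum_neg_log
    (fun q => norm_natCast_cpow_lt_one q.2.1.two_le (by norm_num))
    (summable_log_T (s := (2:ℂ)) (by norm_num))

end FsqAux

open Complex Filter Topology Real FsqAux in
/-- `(s-1)·F(s)² → 2·F(2)/π` as `s → 1` within `Re(s) > 1`, where `F` is the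
Euler product over the primes `q ≡ 3 (mod 4)`. Thus `F(s)²` has a simple pole at
`s = 1` with limiting residue `2F(2)/π`. -/
theorem F_squared_simple_pole :
    Filter.Tendsto
      (fun s : ℂ =>
        (s - 1) * (∏' q : {q : ℕ // q.Prime ∧ q % 4 = 3},
          (1 - ((q : ℕ) : ℂ) ^ (-s))⁻¹) ^ 2)
      (nhdsWithin 1 {s : ℂ | 1 < s.re})
      (nhds (2 * (∏' q : {q : ℕ // q.Prime ∧ q % 4 = 3},
        (1 - ((q : ℕ) : ℂ) ^ (-(2 : ℂ)))⁻¹) / (Real.pi : ℂ))) := by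
  set F2 : ℂ := ∏' q : {q : ℕ // q.Prime ∧ q % 4 = 3}, (1 - ((q:ℕ):ℂ) ^ (-(2:ℂ)))⁻¹ with hF2
  have T1 : Tendsto (fun s : ℂ => (s-1) * riemannZeta s)
      (𝓝[{s : ℂ | 1 < s.re}] 1) (𝓝 1) := by
    apply riemannZeta_residue_one.mono_left
    apply nhdsWithin_mono
    intro z hz
    simp only [Set.mem_compl_iff, Set.mem_singleton_iff]
    rintro rfl
    simp only [Set.mem_setOf_eq, Complex.one_re] at hz
    exact lt_irrefl 1 hz
  have T2 : Tendsto (fun s : ℂ => 1 - (2:ℂ) ^ (-s))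
      (𝓝[{s : ℂ | 1 < s.re}] 1) (𝓝 (2⁻¹ : ℂ)) := by
    have h : Tendsto (fun s : ℂ => 1 - (2:ℂ) ^ (-s)) (𝓝 1) (𝓝 (1 - (2:ℂ) ^ (-(1:ℂ)))) :=
      (tendsto_const_nhds (x := (1:ℂ))).sub
        ((continuous_neg.tendsto (1:ℂ)).const_cpow (Or.inl two_ne_zero))
    have hval : (1:ℂ) - (2:ℂ) ^ (-(1:ℂ)) = 2⁻¹ := by
      rw [Complex.cpow_neg_one]
      norm_num
    rw [hval] at h
    exact h.mono_left (nhdsWithin_le_nhds (s := {s : ℂ | 1 < s.re}) (a := (1:ℂ)))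

  have T3 : Tendsto (fun s : ℂ => Complex.exp (∑' q : {q : ℕ // q.Prime ∧ q % 4 = 3},
      -Complex.log (1 - ((q:ℕ):ℂ) ^ (-(2*s)))))
      (𝓝[{s : ℂ | 1 < s.re}] 1) (𝓝 F2) := by
    have := (Complex.continuous_exp.tendsto _).comp D_tendsto
    rwa [exp_D_eq] at this
  have T4 : Tendsto (fun s : ℂ => ∑' n : ℕ, χ n * (n:ℂ) ^ (-s))
      (𝓝[{s : ℂ | 1 < s.re}] 1) (𝓝 (((π/4 : ℝ)) : ℂ)) := by
    apply L_tendsto.congr'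
    filter_upwards [eventually_mem_nhdsWithin] with s hs
    exact (L_pair hs).symm
  have hπ4 : (((π/4 : ℝ)) : ℂ) ≠ 0 := by
    rw [Complex.ofReal_ne_zero]
    positivity
  have Hmain := T1.mul (T2.mul (T3.div T4 hπ4))
  rw [one_mul] at Hmain
  have hval : (2⁻¹ : ℂ) * (F2 / (((π/4 : ℝ)) : ℂ)) = 2 * F2 / (Real.pi : ℂ) := by
    have hπ : ((Real.pi : ℝ) : ℂ) ≠ 0 := Complex.ofReal_ne_zero.mpr Real.pi_ne_zero
    rw [Complex.ofReal_div]
    push_cast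
    field_simp
    ring
  rw [hval] at Hmain
  apply Hmain.congr'
  filter_upwards [eventually_mem_nhdsWithin] with s hs
  have hs1 : (1:ℝ) < s.re := hs
  have hL := L_ne_zero (s := s) hs1
  have hsq : (∏' q : {q : ℕ // q.Prime ∧ q % 4 = 3}, (1 - ((q:ℕ):ℂ) ^ (-s))⁻¹) ^ 2
      = riemannZeta s * (1 - (2:ℂ) ^ (-s))
        * Complex.exp (∑' q : {q : ℕ // q.Prime ∧ q % 4 = 3},
            -Complex.log (1 - ((q:ℕ):ℂ) ^ (-(2*s)))) / (∑' n : ℕ, χ n * (n:ℂ) ^ (-s)) := by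
    rw [eq_div_iff hL]
    linear_combination product_eq (s := s) hs1
  simp only [Pi.div_apply]
  rw [hsq]
  ring
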